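/- For every k ≥ 1, the following identity holds in ℚ[[y]]: ( ∑_{n≥0} (−1)^n binom(n+k−1, n) y^n/n! ) · ( ∑_{n≥0} |Ninc_n^{[k]}| y^n/n! ) = 1. -/

import Mathlib

/-!
STATEMENT 17: in ℚ[[y]],
( ∑_{n≥0} (−1)^n C(n+k−1, n) yⁿ/n! ) · ( ∑_{n≥0} |Ninc_n^{[k]}| yⁿ/n! ) = 1.

Colors are 0-indexed: the color set {1,…,k} is modeled by `Fin k` (order-isomorphic).
-/

/-- An ascent of the colored permutation `(σ, c)`. -/
def HasAscent {n : ℕ} {C : Type*} [Preorder C] (σ : Equiv.Perm (Fin n)) (c : Fin n → C) : Prop :=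
  ∃ i : ℕ, ∃ h : i + 1 < n,
    σ ⟨i, Nat.lt_of_succ_lt h⟩ < σ ⟨i + 1, h⟩ ∧
      c (σ ⟨i, Nat.lt_of_succ_lt h⟩) ≤ c (σ ⟨i + 1, h⟩)

/-- `|Ninc_n^{[k]}|`: the number of ascent-free colored permutations of `[n]` with colors
in `Fin k`. -/
noncomputable def nincCount (n k : ℕ) : ℕ :=
  Nat.card {w : Equiv.Perm (Fin n) × (Fin n → Fin k) // ¬ HasAscent w.1 w.2}

namespace NincAux

open Finset


def Asc {n k : ℕ} (w : Equiv.Perm (Fin n) × (Fin n → Fin k)) (i : ℕ) : Prop :=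
  ∃ h : i + 1 < n,
    w.1 ⟨i, Nat.lt_of_succ_lt h⟩ < w.1 ⟨i + 1, h⟩ ∧
      w.2 (w.1 ⟨i, Nat.lt_of_succ_lt h⟩) ≤ w.2 (w.1 ⟨i + 1, h⟩)

def Cond {n k : ℕ} (j : ℕ) (w : Equiv.Perm (Fin n) × (Fin n → Fin k)) : Prop :=
  (∀ i, i + 1 < j → Asc w i) ∧ (∀ i, j ≤ i → ¬ Asc w i)



lemma altsum (n k : ℕ) (hn : 1 ≤ n) :
    ∑ j ∈ Finset.range (n + 1),
      (-1 : ℤ) ^ j * Nat.card {w : Equiv.Perm (Fin n) × (Fin n → Fin k) // Cond j w} = 0 := by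
  classical
  have h1 : ∑ p ∈ (univ : Finset ((Equiv.Perm (Fin n) × (Fin n → Fin k)) × Fin (n+1))).filter
          (fun p => Cond (p.2 : ℕ) p.1), (-1 : ℤ) ^ ((p.2 : ℕ))
      = ∑ j ∈ Finset.range (n + 1),
        (-1 : ℤ) ^ j * Nat.card {w : Equiv.Perm (Fin n) × (Fin n → Fin k) // Cond j w} := by
    rw [Finset.sum_filter, Fintype.sum_prod_type, Finset.sum_comm,
      ← Fin.sum_univ_eq_sum_range
      (fun j => (-1 : ℤ) ^ j * Nat.card {w : Equiv.Perm (Fin n) × (Fin n → Fin k) // Cond j w})]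
    refine Finset.sum_congr rfl fun j _ => ?_
    have hpt : ∀ a : Equiv.Perm (Fin n) × (Fin n → Fin k),
        (if Cond (((a, j).2 : Fin (n+1)) : ℕ) (a, j).1 then
            ((-1:ℤ)) ^ (((a, j).2 : Fin (n+1)) : ℕ) else 0)
          = if Cond (j : ℕ) a then (-1:ℤ) ^ (j : ℕ) else 0 := fun a => rfl
    rw [Finset.sum_congr rfl (fun a _ => hpt a), ← Finset.sum_filter, Finset.sum_const,
      nsmul_eq_mul, mul_comm, Nat.card_eq_fintype_card, Fintype.card_subtype]
  rw [← h1]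
  set g : ∀ p ∈ (univ : Finset ((Equiv.Perm (Fin n) × (Fin n → Fin k)) × Fin (n+1))).filter
      (fun p => Cond (p.2 : ℕ) p.1), ((Equiv.Perm (Fin n) × (Fin n → Fin k)) × Fin (n+1)) :=
    fun p _ => if h : (p.2 : ℕ) < n ∧ ((p.2 : ℕ) = 0 ∨ Asc p.1 ((p.2 : ℕ) - 1)) then
        (p.1, ⟨(p.2 : ℕ) + 1, Nat.succ_lt_succ h.1⟩)
      else (p.1, ⟨(p.2 : ℕ) - 1, lt_of_le_of_lt (Nat.sub_le _ _) p.2.isLt⟩) with hg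
  have hmem : ∀ p, p ∈ (univ : Finset ((Equiv.Perm (Fin n) × (Fin n → Fin k)) × Fin (n+1))).filter
      (fun p => Cond (p.2 : ℕ) p.1) ↔ Cond (p.2 : ℕ) p.1 := by
    intro p; simp [Finset.mem_filter]
  have hj1 : ∀ (w : Equiv.Perm (Fin n) × (Fin n → Fin k)) (j : ℕ), Cond j w →
      ¬(j < n ∧ (j = 0 ∨ Asc w (j - 1))) → 1 ≤ j := by
    intro w j hc hU
    by_contra h
    have hj0 : j = 0 := by omega
    subst hj0
    exact hU ⟨hn, Or.inl rfl⟩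
  refine Finset.sum_involution g ?_ ?_ ?_ ?_
  · -- signs cancel
    intro p hp
    rw [hmem] at hp
    by_cases hU : (p.2 : ℕ) < n ∧ ((p.2 : ℕ) = 0 ∨ Asc p.1 ((p.2 : ℕ) - 1))
    · simp only [hg, dif_pos hU]
      show (-1 : ℤ) ^ ((p.2 : ℕ)) + (-1 : ℤ) ^ ((p.2 : ℕ) + 1) = 0
      rw [pow_succ]
      ring
    · have h1' : 1 ≤ (p.2 : ℕ) := hj1 p.1 (p.2 : ℕ) hp hU
      simp only [hg, dif_neg hU]
      show (-1 : ℤ) ^ ((p.2 : ℕ)) + (-1 : ℤ) ^ ((p.2 : ℕ) - 1) = 0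
      have h2 : (p.2 : ℕ) = ((p.2 : ℕ) - 1) + 1 := by omega
      rw [h2, pow_succ, Nat.add_sub_cancel]
      ring
  · -- no fixed points
    intro p hp _
    rw [hmem] at hp
    by_cases hU : (p.2 : ℕ) < n ∧ ((p.2 : ℕ) = 0 ∨ Asc p.1 ((p.2 : ℕ) - 1))
    · simp only [hg, dif_pos hU]
      intro h
      have h2 : ((p.2 : ℕ) + 1) = (p.2 : ℕ) := congrArg (fun q : _ × Fin (n+1) => (q.2 : ℕ)) h
      omega
    · have h1' : 1 ≤ (p.2 : ℕ) := hj1 p.1 (p.2 : ℕ) hp hU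
      simp only [hg, dif_neg hU]
      intro h
      have h2 : ((p.2 : ℕ) - 1) = (p.2 : ℕ) := congrArg (fun q : _ × Fin (n+1) => (q.2 : ℕ)) h
      omega
  · -- g stays in the filter
    intro p hp
    rw [hmem] at hp
    rw [hmem]
    obtain ⟨hc1, hc2⟩ := hp
    by_cases hU : (p.2 : ℕ) < n ∧ ((p.2 : ℕ) = 0 ∨ Asc p.1 ((p.2 : ℕ) - 1))
    · simp only [hg, dif_pos hU]
      show Cond ((p.2 : ℕ) + 1) p.1
      constructor
      · intro i hi
        rcases Nat.lt_or_ge (i + 1) (p.2 : ℕ) with h | h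
        · exact hc1 i h
        · have hieq : i = (p.2 : ℕ) - 1 := by omega
          subst hieq
          rcases hU.2 with h0 | ha
          · omega
          · exact ha
      · intro i hi
        exact hc2 i (by omega)
    · have h1' : 1 ≤ (p.2 : ℕ) := hj1 p.1 (p.2 : ℕ) ⟨hc1, hc2⟩ hU
      simp only [hg, dif_neg hU]
      show Cond ((p.2 : ℕ) - 1) p.1
      constructor
      · intro i hi
        exact hc1 i (by omega)
      · intro i hi
        rcases Nat.lt_or_ge i (p.2 : ℕ) with h | h
        · have hieq : i = (p.2 : ℕ) - 1 := by omega
          subst hieq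
          rcases Nat.lt_or_ge (p.2 : ℕ) n with h2 | h2
          · intro ha
            exact hU ⟨h2, Or.inr ha⟩
          · intro ha
            obtain ⟨hlt, -⟩ := ha
            have hjn : (p.2 : ℕ) ≤ n := Nat.lt_succ_iff.mp p.2.isLt
            omega
        · exact hc2 i h
  · -- involution property
    intro p hp
    rw [hmem] at hp
    obtain ⟨hc1, hc2⟩ := hp
    by_cases hU : (p.2 : ℕ) < n ∧ ((p.2 : ℕ) = 0 ∨ Asc p.1 ((p.2 : ℕ) - 1))
    · simp only [hg, dif_pos hU]
      rw [dif_neg]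
      · refine Prod.ext rfl (Fin.ext ?_)
        show (p.2 : ℕ) + 1 - 1 = (p.2 : ℕ)
        omega
      · show ¬((p.2 : ℕ) + 1 < n ∧ ((p.2 : ℕ) + 1 = 0 ∨ Asc p.1 ((p.2 : ℕ) + 1 - 1)))
        rintro ⟨-, h0 | ha⟩
        · omega
        · exact hc2 (p.2 : ℕ) le_rfl (by simpa using ha)
    · have h1' : 1 ≤ (p.2 : ℕ) := hj1 p.1 (p.2 : ℕ) ⟨hc1, hc2⟩ hU
      simp only [hg, dif_neg hU]
      rw [dif_pos]
      · refine Prod.ext rfl (Fin.ext ?_)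
        show (p.2 : ℕ) - 1 + 1 = (p.2 : ℕ)
        omega
      · show ((p.2 : ℕ) - 1 < n ∧ ((p.2 : ℕ) - 1 = 0 ∨ Asc p.1 ((p.2 : ℕ) - 1 - 1)))
        constructor
        · have : (p.2 : ℕ) ≤ n := Nat.lt_succ_iff.mp p.2.isLt
          omega
        · rcases Nat.lt_or_ge 1 (p.2 : ℕ) with h | h
          · right
            have := hc1 ((p.2 : ℕ) - 2) (by omega)
            have heq : (p.2 : ℕ) - 2 = (p.2 : ℕ) - 1 - 1 := by omega
            rwa [heq] at this
          · left; omega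

def HasAscent' {n k : ℕ} (w : Equiv.Perm (Fin n) × (Fin n → Fin k)) : Prop := ∃ i, Asc w i

section Build

lemma hT {n j : ℕ} (S : Finset (Fin n)) (hS : S.card = j) :
    (Sᶜ : Finset (Fin n)).card = n - j := by
  rw [Finset.card_compl, hS, Fintype.card_fin]

/-- the permutation built from the cut data -/
def bPerm {n j : ℕ} (S : Finset (Fin n)) (hS : S.card = j)
    (π : Equiv.Perm (Fin (n - j))) : Equiv.Perm (Fin n) where
  toFun i := if h : (i : ℕ) < j then (S.orderIsoOfFin hS ⟨i, h⟩ : Fin n)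
    else ((Sᶜ).orderIsoOfFin (hT S hS) (π ⟨(i : ℕ) - j, by have := i.isLt; omega⟩) : Fin n)
  invFun v := if h : v ∈ S then ⟨((S.orderIsoOfFin hS).symm ⟨v, h⟩ : ℕ), by
      have h1 := ((S.orderIsoOfFin hS).symm ⟨v, h⟩).isLt
      have h2 : j ≤ n := by
        have := Finset.card_le_univ S
        rwa [hS, Fintype.card_fin] at this
      omega⟩
    else ⟨j + (π.symm (((Sᶜ).orderIsoOfFin (hT S hS)).symm ⟨v, Finset.mem_compl.mpr h⟩) : ℕ), by
      have := (π.symm (((Sᶜ).orderIsoOfFin (hT S hS)).symm ⟨v, Finset.mem_compl.mpr h⟩)).isLt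
      omega⟩
  left_inv i := by
    dsimp only
    by_cases h : (i : ℕ) < j
    · rw [dif_pos h]
      have hmem : (S.orderIsoOfFin hS ⟨i, h⟩ : Fin n) ∈ S := (S.orderIsoOfFin hS ⟨i, h⟩).2
      rw [dif_pos hmem]
      apply Fin.ext
      have : (⟨(S.orderIsoOfFin hS ⟨i, h⟩ : Fin n), hmem⟩ : {x // x ∈ S})
          = S.orderIsoOfFin hS ⟨i, h⟩ := Subtype.ext rfl
      show (((S.orderIsoOfFin hS).symm ⟨(S.orderIsoOfFin hS ⟨i, h⟩ : Fin n), hmem⟩ : Fin j) : ℕ) = (i : ℕ)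
      rw [this, OrderIso.symm_apply_apply]
    · rw [dif_neg h]
      set y := π ⟨(i : ℕ) - j, by have := i.isLt; omega⟩ with hy
      have hmem : ((Sᶜ).orderIsoOfFin (hT S hS) y : Fin n) ∈ Sᶜ := ((Sᶜ).orderIsoOfFin (hT S hS) y).2
      have hnotS : ((Sᶜ).orderIsoOfFin (hT S hS) y : Fin n) ∉ S := Finset.mem_compl.mp hmem
      rw [dif_neg hnotS]
      apply Fin.ext
      have h1 : (⟨((Sᶜ).orderIsoOfFin (hT S hS) y : Fin n), Finset.mem_compl.mpr hnotS⟩ : {x // x ∈ Sᶜ})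
          = (Sᶜ).orderIsoOfFin (hT S hS) y := Subtype.ext rfl
      show j + ((π.symm (((Sᶜ).orderIsoOfFin (hT S hS)).symm ⟨((Sᶜ).orderIsoOfFin (hT S hS) y : Fin n), Finset.mem_compl.mpr hnotS⟩) : Fin (n - j)) : ℕ) = (i : ℕ)
      rw [h1, OrderIso.symm_apply_apply, Equiv.symm_apply_apply]
      show j + ((i : ℕ) - j) = (i : ℕ)
      omega
  right_inv v := by
    dsimp only
    by_cases h : v ∈ S
    · rw [dif_pos h]
      have h2 : (((S.orderIsoOfFin hS).symm ⟨v, h⟩ : Fin j) : ℕ) < j :=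
        ((S.orderIsoOfFin hS).symm ⟨v, h⟩).isLt
      rw [dif_pos h2]
      have h3 : (⟨(((S.orderIsoOfFin hS).symm ⟨v, h⟩ : Fin j) : ℕ), h2⟩ : Fin j)
          = (S.orderIsoOfFin hS).symm ⟨v, h⟩ := Fin.ext rfl
      rw [h3, OrderIso.apply_symm_apply]
    · rw [dif_neg h]
      set m := π.symm (((Sᶜ).orderIsoOfFin (hT S hS)).symm ⟨v, Finset.mem_compl.mpr h⟩) with hm
      have h2 : ¬ ((j + (m : ℕ)) < j) := by omega
      rw [dif_neg (by simpa using h2)]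
      have h3 : (⟨j + (m : ℕ) - j, by have := m.isLt; omega⟩ : Fin (n - j)) = m := by
        apply Fin.ext; show j + (m : ℕ) - j = (m : ℕ); omega
      rw [h3, hm, Equiv.apply_symm_apply, OrderIso.apply_symm_apply]

/-- the coloring built from the cut data -/
def bCol {n k j : ℕ} (S : Finset (Fin n)) (hS : S.card = j)
    (g : Fin j →o Fin k) (d : Fin (n - j) → Fin k) : Fin n → Fin k := fun v =>
  if h : v ∈ S then g ((S.orderIsoOfFin hS).symm ⟨v, h⟩)
  else d (((Sᶜ).orderIsoOfFin (hT S hS)).symm ⟨v, Finset.mem_compl.mpr h⟩)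

lemma bPerm_lt {n j : ℕ} (S : Finset (Fin n)) (hS : S.card = j)
    (π : Equiv.Perm (Fin (n - j))) (i : Fin n) (h : (i : ℕ) < j) :
    bPerm S hS π i = (S.orderIsoOfFin hS ⟨i, h⟩ : Fin n) := dif_pos h

lemma bPerm_ge {n j : ℕ} (S : Finset (Fin n)) (hS : S.card = j)
    (π : Equiv.Perm (Fin (n - j))) (i : Fin n) (h : ¬ (i : ℕ) < j) :
    bPerm S hS π i
      = ((Sᶜ).orderIsoOfFin (hT S hS) (π ⟨(i : ℕ) - j, by have := i.isLt; omega⟩) : Fin n) :=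
  dif_neg h

lemma bCol_apply_lt {n k j : ℕ} (S : Finset (Fin n)) (hS : S.card = j)
    (π : Equiv.Perm (Fin (n - j)))
    (g : Fin j →o Fin k) (d : Fin (n - j) → Fin k) (i : Fin n) (h : (i : ℕ) < j) :
    bCol S hS g d (bPerm S hS π i) = g ⟨i, h⟩ := by
  rw [bPerm_lt S hS π i h]
  have hmem : (S.orderIsoOfFin hS ⟨i, h⟩ : Fin n) ∈ S := (S.orderIsoOfFin hS ⟨i, h⟩).2
  rw [bCol, dif_pos hmem]
  congr 1
  have : (⟨(S.orderIsoOfFin hS ⟨i, h⟩ : Fin n), hmem⟩ : {x // x ∈ S})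
      = S.orderIsoOfFin hS ⟨i, h⟩ := Subtype.ext rfl
  rw [this, OrderIso.symm_apply_apply]

lemma bCol_apply_ge {n k j : ℕ} (S : Finset (Fin n)) (hS : S.card = j)
    (π : Equiv.Perm (Fin (n - j)))
    (g : Fin j →o Fin k) (d : Fin (n - j) → Fin k) (i : Fin n) (h : ¬ (i : ℕ) < j) :
    bCol S hS g d (bPerm S hS π i) = d (π ⟨(i : ℕ) - j, by have := i.isLt; omega⟩) := by
  rw [bPerm_ge S hS π i h]
  set y := π ⟨(i : ℕ) - j, by have := i.isLt; omega⟩ with hy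
  have hmem : ((Sᶜ).orderIsoOfFin (hT S hS) y : Fin n) ∈ Sᶜ := ((Sᶜ).orderIsoOfFin (hT S hS) y).2
  rw [bCol, dif_neg (Finset.mem_compl.mp hmem)]
  congr 1
  have h1 : (⟨((Sᶜ).orderIsoOfFin (hT S hS) y : Fin n),
      Finset.mem_compl.mpr (Finset.mem_compl.mp hmem)⟩ : {x // x ∈ Sᶜ})
      = (Sᶜ).orderIsoOfFin (hT S hS) y := Subtype.ext rfl
  rw [h1, OrderIso.symm_apply_apply]

set_option maxHeartbeats 1000000 in
lemma cond_b {n k j : ℕ} (hj : j ≤ n) (S : Finset (Fin n)) (hS : S.card = j)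
    (π : Equiv.Perm (Fin (n - j))) (g : Fin j →o Fin k) (d : Fin (n - j) → Fin k)
    (hd : ¬ HasAscent' ((π, d) : Equiv.Perm (Fin (n-j)) × (Fin (n-j) → Fin k))) :
    Cond j ((bPerm S hS π, bCol S hS g d) :
      Equiv.Perm (Fin n) × (Fin n → Fin k)) := by
  constructor
  · intro i hij
    have hin : i + 1 < n := by omega
    refine ⟨hin, ?_, ?_⟩
    · show (bPerm S hS π) ⟨i, Nat.lt_of_succ_lt hin⟩ < (bPerm S hS π) ⟨i + 1, hin⟩
      rw [bPerm_lt S hS π ⟨i, Nat.lt_of_succ_lt hin⟩ (by exact (by omega : i < j)),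
        bPerm_lt S hS π ⟨i + 1, hin⟩ (by exact hij)]
      have : (⟨(⟨i, Nat.lt_of_succ_lt hin⟩ : Fin n), Nat.lt_of_succ_lt hij⟩ : Fin j)
          < ⟨i + 1, hij⟩ := by
        simp [Fin.lt_def]
      exact Subtype.coe_lt_coe.mpr ((S.orderIsoOfFin hS).strictMono this)
    · show bCol S hS g d ((bPerm S hS π) ⟨i, Nat.lt_of_succ_lt hin⟩)
          ≤ bCol S hS g d ((bPerm S hS π) ⟨i + 1, hin⟩)
      rw [bCol_apply_lt S hS π g d ⟨i, Nat.lt_of_succ_lt hin⟩ (by exact (by omega : i < j)),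
        bCol_apply_lt S hS π g d ⟨i + 1, hin⟩ (by exact hij)]
      exact g.monotone (by simp [Fin.le_def])
  · intro i hji ha
    obtain ⟨hin, hlt, hle⟩ := ha
    apply hd
    have hb1 : ¬ ((⟨i, Nat.lt_of_succ_lt hin⟩ : Fin n) : ℕ) < j := by exact (by omega : ¬ i < j)
    have hb2 : ¬ ((⟨i + 1, hin⟩ : Fin n) : ℕ) < j := by exact (by omega : ¬ i + 1 < j)
    have hle' : bCol S hS g d ((bPerm S hS π) ⟨i, Nat.lt_of_succ_lt hin⟩)
        ≤ bCol S hS g d ((bPerm S hS π) ⟨i + 1, hin⟩) := hle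
    have hlt' : (bPerm S hS π) ⟨i, Nat.lt_of_succ_lt hin⟩ < (bPerm S hS π) ⟨i + 1, hin⟩ := hlt
    rw [bPerm_ge S hS π _ hb1, bPerm_ge S hS π _ hb2] at hlt'
    rw [bCol_apply_ge S hS π g d _ hb1, bCol_apply_ge S hS π g d _ hb2] at hle'
    refine ⟨i - j, by omega, ?_, ?_⟩
    · have h2 : π ⟨i - j, by omega⟩ < π ⟨i + 1 - j, by omega⟩ := by
        exact ((Sᶜ).orderIsoOfFin (hT S hS)).lt_iff_lt.mp (Subtype.coe_lt_coe.mp hlt')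
      have h3 : (⟨i + 1 - j, by omega⟩ : Fin (n - j)) = ⟨(i - j) + 1, by omega⟩ := by
        apply Fin.ext; show i + 1 - j = (i - j) + 1; omega
      rw [h3] at h2
      exact h2
    · have h3 : (⟨i + 1 - j, by omega⟩ : Fin (n - j)) = ⟨(i - j) + 1, by omega⟩ := by
        apply Fin.ext; show i + 1 - j = (i - j) + 1; omega
      rw [h3] at hle'
      exact hle'

end Build

section Inverse

lemma chain_strictMono {m : ℕ} {α : Type*} [Preorder α] {f : Fin m → α}
    (h : ∀ i : ℕ, (hi : i + 1 < m) → f ⟨i, Nat.lt_of_succ_lt hi⟩ < f ⟨i + 1, hi⟩) :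
    StrictMono f := by
  cases m with
  | zero => intro a; exact a.elim0
  | succ m' =>
    rw [Fin.strictMono_iff_lt_succ]
    intro i
    exact h i.1 (Nat.succ_lt_succ i.isLt)

lemma chain_monotone {m : ℕ} {α : Type*} [Preorder α] {f : Fin m → α}
    (h : ∀ i : ℕ, (hi : i + 1 < m) → f ⟨i, Nat.lt_of_succ_lt hi⟩ ≤ f ⟨i + 1, hi⟩) :
    Monotone f := by
  cases m with
  | zero => intro a; exact a.elim0
  | succ m' =>
    rw [Fin.monotone_iff_le_succ]
    intro i
    exact h i.1 (Nat.succ_lt_succ i.isLt)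

lemma symm_congr {n : ℕ} {s t : Finset (Fin n)} (hst : s = t) {m : ℕ}
    (hsm : s.card = m) (htm : t.card = m) (v : Fin n) (hv : v ∈ s) (hv' : v ∈ t) :
    (s.orderIsoOfFin hsm).symm ⟨v, hv⟩ = (t.orderIsoOfFin htm).symm ⟨v, hv'⟩ := by
  subst hst; rfl

lemma apply_coe_congr {n : ℕ} {s t : Finset (Fin n)} (hst : s = t) {m : ℕ}
    (hsm : s.card = m) (htm : t.card = m) (i : Fin m) :
    (s.orderIsoOfFin hsm i : Fin n) = (t.orderIsoOfFin htm i : Fin n) := by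
  subst hst; rfl

variable {n k j : ℕ}

/-- the set of values of the prefix -/
def wS (hj : j ≤ n) (w : Equiv.Perm (Fin n) × (Fin n → Fin k)) : Finset (Fin n) :=
  Finset.image (fun i : Fin j => w.1 (Fin.castLE hj i)) Finset.univ

lemma wS_card (hj : j ≤ n) (w : Equiv.Perm (Fin n) × (Fin n → Fin k)) :
    (wS hj w).card = j := by
  rw [wS, Finset.card_image_of_injective _
      (show Function.Injective (fun i : Fin j => w.1 (Fin.castLE hj i)) from
        fun a b hab => Fin.castLE_injective hj (w.1.injective hab)),
    Finset.card_univ, Fintype.card_fin]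

lemma not_mem_wS (hj : j ≤ n) (w : Equiv.Perm (Fin n) × (Fin n → Fin k))
    (x : ℕ) (hx : j ≤ x) (hxn : x < n) : w.1 ⟨x, hxn⟩ ∉ wS hj w := by
  rw [wS, Finset.mem_image]
  rintro ⟨i, -, hi⟩
  have := w.1.injective hi
  have : (i : ℕ) = x := congrArg Fin.val this
  have := i.isLt
  omega

lemma f0_strictMono (hj : j ≤ n) (w : Equiv.Perm (Fin n) × (Fin n → Fin k)) (hw : Cond j w) :
    StrictMono (fun i : Fin j => w.1 (Fin.castLE hj i)) := by
  apply chain_strictMono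
  intro i hi
  obtain ⟨h', hlt, -⟩ := hw.1 i hi
  exact hlt

lemma f0_eq (hj : j ≤ n) (w : Equiv.Perm (Fin n) × (Fin n → Fin k)) (hw : Cond j w) :
    (fun i : Fin j => w.1 (Fin.castLE hj i)) = (wS hj w).orderEmbOfFin (wS_card hj w) := by
  apply Finset.orderEmbOfFin_unique (wS_card hj w) _ (f0_strictMono hj w hw)
  intro x
  rw [wS, Finset.mem_image]
  exact ⟨x, Finset.mem_univ x, rfl⟩

/-- the color word of the prefix -/
def wG (hj : j ≤ n) (w : Equiv.Perm (Fin n) × (Fin n → Fin k)) (hw : Cond j w) :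
    Fin j →o Fin k :=
  ⟨fun i => w.2 (w.1 (Fin.castLE hj i)), by
    apply chain_monotone
    intro i hi
    obtain ⟨h', -, hle⟩ := hw.1 i hi
    exact hle⟩

lemma wT_card (hj : j ≤ n) (w : Equiv.Perm (Fin n) × (Fin n → Fin k)) :
    ((wS hj w)ᶜ).card = n - j := by
  rw [Finset.card_compl, wS_card hj w, Fintype.card_fin]

lemma wsuffix_mem (hj : j ≤ n) (w : Equiv.Perm (Fin n) × (Fin n → Fin k)) (x : Fin (n - j)) :
    w.1 ⟨j + (x : ℕ), by have := x.isLt; omega⟩ ∈ (wS hj w)ᶜ :=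
  Finset.mem_compl.mpr (not_mem_wS hj w _ (Nat.le_add_right _ _) _)

/-- the pattern of the suffix -/
noncomputable def wPi (hj : j ≤ n) (w : Equiv.Perm (Fin n) × (Fin n → Fin k)) :
    Equiv.Perm (Fin (n - j)) :=
  Equiv.ofBijective
    (fun x => (((wS hj w)ᶜ).orderIsoOfFin (wT_card hj w)).symm
      ⟨w.1 ⟨j + (x : ℕ), by have := x.isLt; omega⟩, wsuffix_mem hj w x⟩)
    (by
      rw [← Finite.injective_iff_bijective]
      intro x y hxy
      have h1 := congrArg (((wS hj w)ᶜ).orderIsoOfFin (wT_card hj w)) hxy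
      rw [OrderIso.apply_symm_apply, OrderIso.apply_symm_apply] at h1
      have h2 := congrArg (fun z : {v // v ∈ (wS hj w)ᶜ} => (z : Fin n)) h1
      have h3 := w.1.injective h2
      have h4 : j + (x : ℕ) = j + (y : ℕ) := congrArg Fin.val h3
      exact Fin.ext (by omega))

lemma wPi_apply (hj : j ≤ n) (w : Equiv.Perm (Fin n) × (Fin n → Fin k)) (x : Fin (n - j)) :
    ((((wS hj w)ᶜ).orderIsoOfFin (wT_card hj w)) (wPi hj w x) : Fin n)
      = w.1 ⟨j + (x : ℕ), by have := x.isLt; omega⟩ := by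
  rw [wPi, Equiv.ofBijective_apply, OrderIso.apply_symm_apply]

/-- the colors of the suffix -/
def wD (hj : j ≤ n) (w : Equiv.Perm (Fin n) × (Fin n → Fin k)) : Fin (n - j) → Fin k :=
  fun x => w.2 ((((wS hj w)ᶜ).orderIsoOfFin (wT_card hj w)) x : Fin n)

lemma wNoAsc (hj : j ≤ n) (w : Equiv.Perm (Fin n) × (Fin n → Fin k)) (hw : Cond j w) :
    ¬ HasAscent' ((wPi hj w, wD hj w) :
      Equiv.Perm (Fin (n - j)) × (Fin (n - j) → Fin k)) := by
  rintro ⟨x, hx, hlt, hle⟩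
  apply hw.2 (j + x) (Nat.le_add_right _ _)
  refine ⟨by omega, ?_, ?_⟩
  · have e1 := wPi_apply hj w ⟨x, Nat.lt_of_succ_lt hx⟩
    have e2 := wPi_apply hj w ⟨x + 1, hx⟩
    have h1 : (((wS hj w)ᶜ).orderIsoOfFin (wT_card hj w)) (wPi hj w ⟨x, Nat.lt_of_succ_lt hx⟩)
        < (((wS hj w)ᶜ).orderIsoOfFin (wT_card hj w)) (wPi hj w ⟨x + 1, hx⟩) := by
      rw [OrderIso.lt_iff_lt]
      exact hlt
    have h2 := Subtype.coe_lt_coe.mpr h1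
    rw [e1, e2] at h2
    exact h2
  · have e1 := wPi_apply hj w ⟨x, Nat.lt_of_succ_lt hx⟩
    have e2 := wPi_apply hj w ⟨x + 1, hx⟩
    have h2 : wD hj w (wPi hj w ⟨x, Nat.lt_of_succ_lt hx⟩)
        ≤ wD hj w (wPi hj w ⟨x + 1, hx⟩) := hle
    simp only [wD] at h2
    rw [e1, e2] at h2
    exact h2

end Inverse

noncomputable def nincCount' (n k : ℕ) : ℕ :=
  Nat.card {w : Equiv.Perm (Fin n) × (Fin n → Fin k) // ¬ HasAscent' w}

set_option maxHeartbeats 1000000 in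
noncomputable def cutEquiv (n k j : ℕ) (hj : j ≤ n) :
    ({S : Finset (Fin n) // S.card = j} × (Fin j →o Fin k) ×
      {w' : Equiv.Perm (Fin (n - j)) × (Fin (n - j) → Fin k) // ¬ HasAscent' w'})
    ≃ {w : Equiv.Perm (Fin n) × (Fin n → Fin k) // Cond j w} where
  toFun p := ⟨(bPerm p.1.1 p.1.2 p.2.2.1.1, bCol p.1.1 p.1.2 p.2.1 p.2.2.1.2),
    cond_b hj p.1.1 p.1.2 p.2.2.1.1 p.2.1 p.2.2.1.2 p.2.2.2⟩
  invFun q := ⟨⟨wS hj q.1, wS_card hj q.1⟩, wG hj q.1 q.2,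
    ⟨(wPi hj q.1, wD hj q.1), wNoAsc hj q.1 q.2⟩⟩
  left_inv := by
    rintro ⟨⟨S, hS⟩, g, ⟨⟨π, d⟩, hd⟩⟩
    set w : Equiv.Perm (Fin n) × (Fin n → Fin k) := (bPerm S hS π, bCol S hS g d) with hwdef
    have hSw : wS hj w = S := by
      ext v
      rw [wS, Finset.mem_image]
      constructor
      · rintro ⟨i, -, rfl⟩
        have hlt : ((Fin.castLE hj i : Fin n) : ℕ) < j := i.isLt
        rw [show w.1 = bPerm S hS π from rfl, bPerm_lt S hS π _ hlt]
        exact (S.orderIsoOfFin hS ⟨(Fin.castLE hj i : Fin n), hlt⟩).2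
      · intro hv
        refine ⟨(S.orderIsoOfFin hS).symm ⟨v, hv⟩, Finset.mem_univ _, ?_⟩
        have hlt : ((Fin.castLE hj ((S.orderIsoOfFin hS).symm ⟨v, hv⟩) : Fin n) : ℕ) < j :=
          ((S.orderIsoOfFin hS).symm ⟨v, hv⟩).isLt
        rw [show w.1 = bPerm S hS π from rfl, bPerm_lt S hS π _ hlt]
        have he : (⟨((Fin.castLE hj ((S.orderIsoOfFin hS).symm ⟨v, hv⟩) : Fin n) : ℕ), hlt⟩ : Fin j)
            = (S.orderIsoOfFin hS).symm ⟨v, hv⟩ := Fin.ext rfl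
        rw [he, OrderIso.apply_symm_apply]
    refine Prod.ext ?_ (Prod.ext ?_ ?_)
    · exact Subtype.ext hSw
    · apply OrderHom.ext
      funext i
      show bCol S hS g d (bPerm S hS π (Fin.castLE hj i)) = g i
      rw [bCol_apply_lt S hS π g d (Fin.castLE hj i) i.isLt]
      exact congrArg g (Fin.ext rfl)
    · apply Subtype.ext
      refine Prod.ext ?_ ?_
      · -- wPi = π
        apply Equiv.ext
        intro x
        show (((wS hj w)ᶜ).orderIsoOfFin (wT_card hj w)).symm
          ⟨w.1 ⟨j + (x : ℕ), by have := x.isLt; omega⟩, wsuffix_mem hj w x⟩ = π x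
        have hge : ¬ (((⟨j + (x : ℕ), by have := x.isLt; omega⟩ : Fin n)) : ℕ) < j := by
          exact (by omega : ¬ j + (x : ℕ) < j)
        have hval : w.1 ⟨j + (x : ℕ), by have := x.isLt; omega⟩
            = ((Sᶜ).orderIsoOfFin (hT S hS) (π x) : Fin n) := by
          rw [show w.1 = bPerm S hS π from rfl, bPerm_ge S hS π _ hge]
          congr 2
          congr 1
          exact Fin.ext (by show j + (x : ℕ) - j = (x : ℕ); omega)
        have hcompl : (wS hj w)ᶜ = Sᶜ := by rw [hSw]
        have hmem' : ((Sᶜ).orderIsoOfFin (hT S hS) (π x) : Fin n) ∈ Sᶜ :=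
          ((Sᶜ).orderIsoOfFin (hT S hS) (π x)).2
        have step : (((wS hj w)ᶜ).orderIsoOfFin (wT_card hj w)).symm
            ⟨w.1 ⟨j + (x : ℕ), by have := x.isLt; omega⟩, wsuffix_mem hj w x⟩
            = ((Sᶜ).orderIsoOfFin (hT S hS)).symm
              ⟨((Sᶜ).orderIsoOfFin (hT S hS) (π x) : Fin n), hmem'⟩ := by
          have := symm_congr hcompl (wT_card hj w) (hT S hS)
            (w.1 ⟨j + (x : ℕ), by have := x.isLt; omega⟩) (wsuffix_mem hj w x)
            (hcompl ▸ wsuffix_mem hj w x)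
          rw [this]
          congr 1
          exact Subtype.ext hval
        rw [step]
        have : (⟨((Sᶜ).orderIsoOfFin (hT S hS) (π x) : Fin n), hmem'⟩ : {v // v ∈ Sᶜ})
            = (Sᶜ).orderIsoOfFin (hT S hS) (π x) := Subtype.ext rfl
        rw [this, OrderIso.symm_apply_apply]
      · -- wD = d
        funext x
        show w.2 ((((wS hj w)ᶜ).orderIsoOfFin (wT_card hj w)) x : Fin n) = d x
        have hcompl : (wS hj w)ᶜ = Sᶜ := by rw [hSw]
        rw [apply_coe_congr hcompl (wT_card hj w) (hT S hS) x]
        have hmem : ((Sᶜ).orderIsoOfFin (hT S hS) x : Fin n) ∈ Sᶜ :=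
          ((Sᶜ).orderIsoOfFin (hT S hS) x).2
        show bCol S hS g d _ = d x
        rw [bCol, dif_neg (Finset.mem_compl.mp hmem)]
        have h1 : (⟨((Sᶜ).orderIsoOfFin (hT S hS) x : Fin n),
            Finset.mem_compl.mpr (Finset.mem_compl.mp hmem)⟩ : {v // v ∈ Sᶜ})
            = (Sᶜ).orderIsoOfFin (hT S hS) x := Subtype.ext rfl
        rw [h1, OrderIso.symm_apply_apply]
  right_inv := by
    rintro ⟨w, hw⟩
    apply Subtype.ext
    have hperm : bPerm (wS hj w) (wS_card hj w) (wPi hj w) = w.1 := by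
      apply Equiv.ext
      intro i
      by_cases h : (i : ℕ) < j
      · rw [bPerm_lt (wS hj w) (wS_card hj w) (wPi hj w) i h]
        rw [Finset.coe_orderIsoOfFin_apply]
        have := congrFun (f0_eq hj w hw).symm ⟨(i : ℕ), h⟩
        rw [this]
        exact congrArg w.1 (Fin.ext rfl)
      · rw [bPerm_ge (wS hj w) (wS_card hj w) (wPi hj w) i h]
        rw [wPi_apply hj w ⟨(i : ℕ) - j, by have := i.isLt; omega⟩]
        congr 1
        exact Fin.ext (by show j + ((i : ℕ) - j) = (i : ℕ); omega)
    refine Prod.ext hperm ?_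
    funext v
    show bCol (wS hj w) (wS_card hj w) (wG hj w hw) (wD hj w) v = w.2 v
    rw [bCol]
    by_cases h : v ∈ wS hj w
    · rw [dif_pos h]
      show w.2 (w.1 (Fin.castLE hj (((wS hj w).orderIsoOfFin (wS_card hj w)).symm ⟨v, h⟩))) = w.2 v
      congr 1
      have := congrFun (f0_eq hj w hw) (((wS hj w).orderIsoOfFin (wS_card hj w)).symm ⟨v, h⟩)
      rw [this, ← Finset.coe_orderIsoOfFin_apply, OrderIso.apply_symm_apply]
    · rw [dif_neg h]
      show w.2 ((((wS hj w)ᶜ).orderIsoOfFin (wT_card hj w))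
        ((((wS hj w)ᶜ).orderIsoOfFin (wT_card hj w)).symm ⟨v, Finset.mem_compl.mpr h⟩) : Fin n)
          = w.2 v
      rw [OrderIso.apply_symm_apply]

-- === monotone map counting ===

lemma sm_growth {j M : ℕ} {u : Fin j → Fin M} (hu : StrictMono u) :
    ∀ (d : ℕ) (a b : Fin j), (b : ℕ) = (a : ℕ) + d → (u a : ℕ) + d ≤ (u b : ℕ) := by
  intro d
  induction d with
  | zero => intro a b hab; have : a = b := Fin.ext (by omega); subst this; omega
  | succ d ih =>
    intro a b hab
    have hb' : (a : ℕ) + d < j := by have := b.isLt; omega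
    have h1 := ih a ⟨(a : ℕ) + d, hb'⟩ rfl
    have h2 : u ⟨(a : ℕ) + d, hb'⟩ < u b := hu (by simp [Fin.lt_def]; omega)
    have h3 : (u ⟨(a : ℕ) + d, hb'⟩ : ℕ) < (u b : ℕ) := h2
    omega

def monoEquivEmb (j k : ℕ) (hk : 1 ≤ k) : (Fin j →o Fin k) ≃ (Fin j ↪o Fin (j + k - 1)) where
  toFun f := OrderEmbedding.ofStrictMono
      (fun i => (⟨(f i : ℕ) + (i : ℕ), by
        have h1 := (f i).isLt; have h2 := i.isLt; omega⟩ : Fin (j + k - 1)))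
      (by
        intro a b hab
        have h1 : (f a : ℕ) ≤ (f b : ℕ) := f.monotone hab.le
        have h2 : (a : ℕ) < (b : ℕ) := hab
        simp only [Fin.mk_lt_mk]
        omega)
  invFun g := ⟨fun i => ⟨(g i : ℕ) - (i : ℕ), by
      have hj : 0 < j := i.pos
      have hlast : (j : ℕ) - 1 < j := by omega
      have h1 := sm_growth g.strictMono ((j - 1) - (i : ℕ)) i ⟨j - 1, hlast⟩
        (by simp; omega)
      have h2 := (g ⟨j - 1, hlast⟩).isLt
      omega⟩, by
      intro a b hab
      have h1 := sm_growth g.strictMono ((b : ℕ) - (a : ℕ)) a b (by have : (a:ℕ) ≤ b := hab; omega)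
      simp only [Fin.mk_le_mk]
      omega⟩
  left_inv f := by
    apply OrderHom.ext
    funext i
    apply Fin.ext
    show (f i : ℕ) + (i : ℕ) - (i : ℕ) = (f i : ℕ)
    omega
  right_inv g := by
    apply RelEmbedding.ext
    intro i
    apply Fin.ext
    have hi : (i : ℕ) ≤ (g i : ℕ) := by
      have hj : 0 < j := i.pos
      have h1 := sm_growth g.strictMono (i : ℕ) ⟨0, hj⟩ i (by simp)
      omega
    simp only [OrderEmbedding.coe_ofStrictMono]
    show (g i : ℕ) - (i : ℕ) + (i : ℕ) = (g i : ℕ)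
    omega

def embEquivFinset (j m : ℕ) : (Fin j ↪o Fin m) ≃ {s : Finset (Fin m) // s.card = j} where
  toFun f := ⟨univ.image f, by
    rw [Finset.card_image_of_injective _ f.injective, card_univ, Fintype.card_fin]⟩
  invFun s := s.1.orderEmbOfFin s.2
  left_inv f := by
    symm
    apply Finset.orderEmbOfFin_unique'
    intro x
    exact Finset.mem_image_of_mem _ (mem_univ x)
  right_inv s := by
    apply Subtype.ext
    apply Finset.coe_injective
    rw [Finset.coe_image, Finset.coe_univ, Set.image_univ]
    exact Finset.range_orderEmbOfFin s.1 s.2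

lemma card_finset_card_eq (m j : ℕ) :
    Nat.card {s : Finset (Fin m) // s.card = j} = m.choose j := by
  rw [Nat.card_eq_fintype_card, Fintype.card_subtype]
  have h : (univ.filter fun s : Finset (Fin m) => s.card = j) = Finset.powersetCard j univ := by
    ext s
    simp [Finset.mem_powersetCard, Finset.subset_univ, eq_comm]
  rw [h, Finset.card_powersetCard, Finset.card_univ, Fintype.card_fin]

lemma card_orderHom (j k : ℕ) (hk : 1 ≤ k) :
    Nat.card (Fin j →o Fin k) = (j + k - 1).choose j := by
  rw [Nat.card_congr ((monoEquivEmb j k hk).trans (embEquivFinset j (j + k - 1))),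
    card_finset_card_eq]

lemma card_cut (n k j : ℕ) (hk : 1 ≤ k) (hj : j ≤ n) :
    Nat.card {w : Equiv.Perm (Fin n) × (Fin n → Fin k) // Cond j w}
      = n.choose j * ((j + k - 1).choose j * nincCount' (n - j) k) := by
  rw [← Nat.card_congr (cutEquiv n k j hj), Nat.card_prod, Nat.card_prod,
    card_finset_card_eq, card_orderHom j k hk, nincCount']

lemma nincCount'_zero (k : ℕ) : nincCount' 0 k = 1 := by
  rw [nincCount', Nat.card_eq_one_iff_unique]
  constructor
  · constructor
    rintro ⟨⟨a, b⟩, -⟩ ⟨⟨c, d⟩, -⟩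
    apply Subtype.ext
    refine Prod.ext ?_ ?_
    · apply Equiv.ext; intro x; exact x.elim0
    · funext x; exact x.elim0
  · exact ⟨⟨(1, fun x => x.elim0), by rintro ⟨i, hi, -⟩; omega⟩⟩

lemma key (n k : ℕ) (hk : 1 ≤ k) :
    ∑ j ∈ Finset.range (n + 1),
      (-1 : ℤ) ^ j * ((n.choose j : ℤ) * ((j + k - 1).choose j * nincCount' (n - j) k))
      = if n = 0 then 1 else 0 := by
  rcases Nat.eq_zero_or_pos n with rfl | hn
  · simp [nincCount'_zero]
  · rw [if_neg (by omega), ← altsum n k hn]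
    refine Finset.sum_congr rfl fun j hj => ?_
    have hjn : j ≤ n := by
      have := Finset.mem_range.mp hj; omega
    rw [card_cut n k j hk hjn]
    push_cast
    ring


lemma nincCount'_eq (n k : ℕ) : nincCount' n k = nincCount n k := rfl

end NincAux

theorem ninc_egf_multiplicative_inverse (k : ℕ) (hk : 1 ≤ k) :
    (PowerSeries.mk fun n =>
        ((-1 : ℚ) ^ n * (Nat.choose (n + k - 1) n : ℚ)) / (Nat.factorial n : ℚ)) *
      (PowerSeries.mk fun n => (nincCount n k : ℚ) / (Nat.factorial n : ℚ)) = 1 := by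
  have key := fun n => NincAux.key n k hk
  simp only [NincAux.nincCount'_eq] at key
  ext n
  rw [PowerSeries.coeff_mul, PowerSeries.coeff_one]
  simp only [PowerSeries.coeff_mk]
  rw [Finset.Nat.sum_antidiagonal_eq_sum_range_succ_mk]
  have hfac : ∀ m : ℕ, (Nat.factorial m : ℚ) ≠ 0 := fun m => by
    exact_mod_cast (Nat.factorial_pos m).ne'
  have hstep : ∀ i ∈ Finset.range (n + 1),
      ((-1 : ℚ) ^ i * ((i + k - 1).choose i : ℚ)) / (Nat.factorial i : ℚ) *
        ((nincCount (n - i) k : ℚ) / (Nat.factorial (n - i) : ℚ))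
      = ((((-1 : ℤ) ^ i * ((n.choose i : ℤ) * ((i + k - 1).choose i * nincCount (n - i) k))) : ℤ) : ℚ)
          / (Nat.factorial n : ℚ) := by
    intro i hi
    have hin : i ≤ n := by simpa using Nat.lt_succ_iff.mp (Finset.mem_range.mp hi)
    have hch : (n.choose i : ℚ) * (Nat.factorial i : ℚ) * (Nat.factorial (n - i) : ℚ)
        = (Nat.factorial n : ℚ) := by
      exact_mod_cast congrArg (Nat.cast : ℕ → ℚ) (Nat.choose_mul_factorial_mul_factorial hin)
    push_cast
    field_simp
    linear_combination (-(((i + k - 1).choose i : ℚ)) * ((nincCount (n - i) k : ℚ))) * hch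
  rw [Finset.sum_congr rfl hstep, ← Finset.sum_div]
  rw [← Int.cast_sum, key n]
  by_cases hn : n = 0
  · subst hn; simp
  · simp [hn]
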